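/- Let p be a prime, ω = exp(2πi/p), c = i^{1−p²}, and let A, B be the p×p complex matrices defined by A e_l = c·e_{l+1} and B e_l = c·ω^l·e_l for l ∈ ℤ/p. For integers (k, l) let m_{(k,l)} = su(p) ∩ (ℂ·A^k B^l + ℂ·A^{−k} B^{−l}). Then for all integer pairs (k, l) and (k′, l′), each nonzero modulo p, one has [m_{(k,l)}, m_{(k′,l′)}] = 0 (i.e. [X, Y] = 0 for all X ∈ m_{(k,l)}, Y ∈ m_{(k′,l′)}) if and only if k l′ ≡ k′ l (mod p), i.e. if and only if the vectors (k, l) and (k′, l′) are proportional over the field ℤ/p. -/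

import Mathlib

open Matrix

noncomputable def chi (p : ℕ) (ω : ℂ) (x : ZMod p) : ℂ := ω ^ x.val

noncomputable def FF (p : ℕ) (ω c : ℂ) (k l : ℤ) : Matrix (ZMod p) (ZMod p) ℂ :=
  fun r s => if r = s + (k : ZMod p) then c ^ (k + l) * chi p ω ((l : ZMod p) * s) else 0

section basic
variable {p : ℕ} [NeZero p] {ω : ℂ}

-- ω ^ p = 1
lemma omega_pow_p (hp : 0 < p) (hω : ω = Complex.exp (2 * Real.pi * Complex.I / p)) :
    ω ^ p = 1 := by
  have hp0 : (p : ℂ) ≠ 0 := by exact_mod_cast hp.ne'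
  rw [hω, ← Complex.exp_nat_mul]
  rw [show (p : ℂ) * (2 * Real.pi * Complex.I / p) = 2 * Real.pi * Complex.I by
    field_simp]
  exact Complex.exp_two_pi_mul_I

lemma omega_zpow_eq_one_iff (hp : 0 < p) (hω : ω = Complex.exp (2 * Real.pi * Complex.I / p))
    (n : ℤ) : ω ^ n = 1 ↔ (p : ℤ) ∣ n := by
  have hp0 : (p : ℂ) ≠ 0 := by exact_mod_cast hp.ne'
  have h2 : (2 * Real.pi * Complex.I : ℂ) ≠ 0 := by
    simp [Real.pi_ne_zero, Complex.I_ne_zero]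
  rw [hω, ← Complex.exp_int_mul, Complex.exp_eq_one_iff]
  constructor
  · rintro ⟨m, hm⟩
    refine ⟨m, ?_⟩
    field_simp at hm
    have : (n : ℂ) * (2 * Real.pi * Complex.I) = (m * p : ℂ) * (2 * Real.pi * Complex.I) := by
      push_cast
      linear_combination (2 * Real.pi * Complex.I) * hm
    have := mul_right_cancel₀ h2 this
    have h3 : n = m * (p:ℤ) := by exact_mod_cast this
    exact h3.trans (mul_comm _ _)
  · rintro ⟨m, rfl⟩
    exact ⟨m, by field_simp; push_cast; ring⟩
end basic

section chi
variable {p : ℕ} [NeZero p] {ω : ℂ}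

lemma chi_natCast (hone : ω ^ p = 1) (n : ℕ) : ω ^ n = chi p ω (n : ZMod p) := by
  unfold chi
  rw [ZMod.val_natCast]
  conv_lhs => rw [← Nat.div_add_mod n p, pow_add, pow_mul, hone, one_pow, one_mul]

lemma chi_zero : chi p ω 0 = 1 := by simp [chi, ZMod.val_zero]

lemma chi_add (hone : ω ^ p = 1) (x y : ZMod p) :
    chi p ω (x + y) = chi p ω x * chi p ω y := by
  have hxy : ((x.val + y.val : ℕ) : ZMod p) = x + y := by
    push_cast [ZMod.natCast_val, ZMod.cast_id]
    rfl
  rw [← hxy, ← chi_natCast hone, pow_add]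
  rfl

lemma chi_mul_neg (hone : ω ^ p = 1) (x : ZMod p) : chi p ω x * chi p ω (-x) = 1 := by
  rw [← chi_add hone, add_neg_cancel, chi_zero]

lemma chi_ne_zero (hω0 : ω ≠ 0) (x : ZMod p) : chi p ω x ≠ 0 := pow_ne_zero _ hω0

lemma chi_inj (hω0 : ω ≠ 0) (hdvd : ∀ n : ℤ, ω ^ n = 1 ↔ (p : ℤ) ∣ n)
    (x y : ZMod p) (h : chi p ω x = chi p ω y) : x = y := by
  have h1 : ω ^ ((x.val : ℤ) - (y.val : ℤ)) = 1 := by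
    rw [zpow_sub₀ hω0, zpow_natCast, zpow_natCast, chi, chi] at *
    rw [h]
    exact div_self (pow_ne_zero _ hω0)
  have h2 : (p : ℤ) ∣ (x.val : ℤ) - (y.val : ℤ) := (hdvd _).mp h1
  have h4 := (ZMod.intCast_zmod_eq_zero_iff_dvd _ p).mpr h2
  push_cast [ZMod.natCast_val, ZMod.cast_id] at h4
  exact sub_eq_zero.mp h4

lemma conj_omega (hω : ω = Complex.exp (2 * Real.pi * Complex.I / p)) :
    ω * (starRingEnd ℂ) ω = 1 := by
  rw [hω, ← Complex.exp_conj, ← Complex.exp_add]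
  rw [show (starRingEnd ℂ) (2 * Real.pi * Complex.I / p) = -(2 * Real.pi * Complex.I / p) by
    simp [map_div₀, Complex.conj_I, Complex.conj_ofNat]; ring]
  simp

lemma conj_chi (hone : ω ^ p = 1) (hω0 : ω ≠ 0)
    (hconj : ω * (starRingEnd ℂ) ω = 1) (x : ZMod p) :
    (starRingEnd ℂ) (chi p ω x) = chi p ω (-x) := by
  have h1 : chi p ω x * (starRingEnd ℂ) (chi p ω x) = 1 := by
    rw [chi, map_pow, ← mul_pow, hconj, one_pow]
  have h2 := chi_mul_neg (p := p) (ω := ω) hone x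
  have hx := chi_ne_zero (p := p) (ω := ω) hω0 x
  rw [← h1] at h2
  exact mul_left_cancel₀ hx h2.symm
end chi

section Fmat
variable {p : ℕ} [NeZero p] {ω c : ℂ}

lemma FF_apply (k l : ℤ) (r s : ZMod p) :
    FF p ω c k l r s = if r = s + (k : ZMod p) then c ^ (k + l) * chi p ω ((l : ZMod p) * s) else 0 := rfl

lemma FF_zero_zero : FF p ω c 0 0 = 1 := by
  ext r s
  simp [FF, chi_zero, Matrix.one_apply, eq_comm]

lemma FF_mul (hone : ω ^ p = 1) (hc0 : c ≠ 0) (k l k' l' : ℤ) :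
    FF p ω c k l * FF p ω c k' l' =
      chi p ω ((l : ZMod p) * (k' : ZMod p)) • FF p ω c (k + k') (l + l') := by
  ext r s
  rw [Matrix.mul_apply]
  rw [Finset.sum_eq_single (s + (k' : ZMod p))]
  · rw [FF_apply, FF_apply, Matrix.smul_apply, FF_apply]
    rw [if_pos rfl]
    have hcond : (r = s + (k' : ZMod p) + (k : ZMod p)) ↔ (r = s + ((k + k' : ℤ) : ZMod p)) := by
      push_cast
      constructor <;> intro h <;> rw [h] <;> ring
    by_cases h : r = s + ((k + k' : ℤ) : ZMod p)
    · rw [if_pos (hcond.mpr h), if_pos h, smul_eq_mul]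
      have e1 : (l : ZMod p) * (s + (k' : ZMod p))
          = (l : ZMod p) * s + (l : ZMod p) * (k' : ZMod p) := by ring
      have e2 : (((l + l' : ℤ)) : ZMod p) * s = (l : ZMod p) * s + (l' : ZMod p) * s := by
        push_cast; ring
      rw [e1, e2, chi_add hone, chi_add hone,
        show k + k' + (l + l') = (k + l) + (k' + l') by ring]
      conv_rhs => rw [zpow_add₀ hc0]
      generalize c ^ (k + l) = u
      generalize c ^ (k' + l') = v
      ring
    · rw [if_neg (fun hh => h (hcond.mp hh)), if_neg h, zero_mul, smul_zero]
  · intro t _ ht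
    simp only [FF_apply]
    rw [if_neg ht, mul_zero]
  · intro h
    exact absurd (Finset.mem_univ _) h

lemma FF_conjTranspose (hone : ω ^ p = 1) (hω0 : ω ≠ 0)
    (hcω : ω * (starRingEnd ℂ) ω = 1) (hcc : (starRingEnd ℂ) c = c⁻¹) (hc0 : c ≠ 0)
    (k l : ℤ) :
    (FF p ω c k l)ᴴ = chi p ω ((k : ZMod p) * (l : ZMod p)) • FF p ω c (-k) (-l) := by
  ext r s
  rw [Matrix.conjTranspose_apply, FF_apply, Matrix.smul_apply, FF_apply]
  have hcond : (s = r + (k : ZMod p)) ↔ (r = s + ((-k : ℤ) : ZMod p)) := by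
    push_cast
    constructor <;> intro h <;> rw [h] <;> ring
  by_cases h : s = r + (k : ZMod p)
  · rw [if_pos h, if_pos (hcond.mp h), smul_eq_mul]
    rw [show (star (c ^ (k + l) * chi p ω ((l : ZMod p) * r)) : ℂ)
        = (starRingEnd ℂ) (c ^ (k + l) * chi p ω ((l : ZMod p) * r)) from rfl]
    have hinv : (c⁻¹ : ℂ) ^ (k + l) = c ^ (-k + -l) := by
      rw [show -k + -l = -(k + l) by ring, _root_.zpow_neg, _root_.inv_zpow]
    rw [map_mul (starRingEnd ℂ), map_zpow₀ (starRingEnd ℂ), hcc, hinv,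
      conj_chi hone hω0 hcω]
    have hr : r = s - (k : ZMod p) := eq_sub_of_add_eq h.symm
    have e : -((l : ZMod p) * r)
        = (k : ZMod p) * (l : ZMod p) + (((-l : ℤ) : ZMod p) * s) := by
      rw [hr]; push_cast; ring
    rw [e, chi_add hone]
    generalize c ^ (-k + -l) = u
    ring
  · rw [if_neg h, if_neg (fun hh => h (hcond.mpr hh)), smul_zero]
    exact star_zero _

lemma FF_ne_zero (hω0 : ω ≠ 0) (hc0 : c ≠ 0) (k l : ℤ) : FF p ω c k l ≠ 0 := by
  intro h
  have h1 := congrFun (congrFun h ((k : ZMod p))) 0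
  rw [FF_apply] at h1
  rw [if_pos (by rw [zero_add])] at h1
  simp only [Matrix.zero_apply] at h1
  exact (mul_ne_zero (zpow_ne_zero _ hc0) (chi_ne_zero hω0 _)) h1

lemma FF_trace (hp : p.Prime) (hone : ω ^ p = 1) (hω0 : ω ≠ 0) (hω1 : ω ≠ 1) (k l : ℤ)
    (h : ¬((k : ZMod p) = 0 ∧ (l : ZMod p) = 0)) :
    (FF p ω c k l).trace = 0 := by
  rw [Matrix.trace]
  by_cases hk : (k : ZMod p) = 0
  · have hl : (l : ZMod p) ≠ 0 := fun hl => h ⟨hk, hl⟩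
    haveI := Fact.mk hp
    have hsum : ∑ s : ZMod p, chi p ω ((l : ZMod p) * s) = 0 := by
      rw [Fintype.sum_bijective (fun s : ZMod p => (l : ZMod p) * s)
        (Equiv.mulLeft₀ _ hl).bijective _ (fun y => chi p ω y) (fun s => rfl)]
      have hre : ∑ y : ZMod p, chi p ω y = ∑ j ∈ Finset.range p, ω ^ j := by
        refine Finset.sum_nbij' (fun y : ZMod p => y.val) (fun j : ℕ => (j : ZMod p))
          (fun a _ => Finset.mem_range.mpr (ZMod.val_lt a)) (fun a _ => Finset.mem_univ _)
          (fun a _ => by simp [ZMod.natCast_val, ZMod.cast_id]) 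
          (fun a ha => ZMod.val_cast_of_lt (Finset.mem_range.mp ha)) (fun a _ => rfl)
      rw [hre, geom_sum_eq hω1, hone, sub_self, zero_div]
    calc ∑ s : ZMod p, (FF p ω c k l).diag s
        = ∑ s : ZMod p, c ^ (k + l) * chi p ω ((l : ZMod p) * s) := by
          refine Finset.sum_congr rfl fun s _ => ?_
          rw [Matrix.diag_apply, FF_apply, if_pos (by rw [hk, add_zero])]
      _ = c ^ (k + l) * ∑ s : ZMod p, chi p ω ((l : ZMod p) * s) := by rw [Finset.mul_sum]
      _ = 0 := by rw [hsum, mul_zero]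
  · refine Finset.sum_eq_zero fun s _ => ?_
    rw [Matrix.diag_apply, FF_apply, if_neg]
    intro hh
    exact hk (left_eq_add.mp hh)

end Fmat

section units
variable {p : ℕ} [NeZero p] {ω c : ℂ}

lemma coe_zpow (hone : ω ^ p = 1) (hc0 : c ≠ 0) (a b : ℤ)
    (hab : (b : ZMod p) * (a : ZMod p) = 0)
    (U : (Matrix (ZMod p) (ZMod p) ℂ)ˣ) (hU : (U : Matrix (ZMod p) (ZMod p) ℂ) = FF p ω c a b) :
    ∀ n : ℤ, ((U ^ n : (Matrix (ZMod p) (ZMod p) ℂ)ˣ) : Matrix (ZMod p) (ZMod p) ℂ)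
      = FF p ω c (n * a) (n * b) := by
  have hUinv : ((U⁻¹ : (Matrix (ZMod p) (ZMod p) ℂ)ˣ) : Matrix (ZMod p) (ZMod p) ℂ)
      = FF p ω c (-a) (-b) := by
    refine Units.inv_eq_of_mul_eq_one_left ?_
    rw [hU, FF_mul hone hc0]
    have h1 : (((-b : ℤ)) : ZMod p) * ((a : ℤ) : ZMod p) = 0 := by
      push_cast
      linear_combination -hab
    rw [h1, chi_zero, one_smul, neg_add_cancel, neg_add_cancel, FF_zero_zero]
  intro n
  induction n using Int.induction_on with
  | zero => rw [zpow_zero, Units.val_one, zero_mul, zero_mul, FF_zero_zero]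
  | succ n ih =>
    rw [_root_.zpow_add_one, Units.val_mul, ih, hU, FF_mul hone hc0]
    have h1 : (((n : ℤ) * b : ℤ) : ZMod p) * ((a : ℤ) : ZMod p) = 0 := by
      push_cast
      linear_combination (n : ZMod p) * hab
    rw [h1, chi_zero, one_smul,
      show (n : ℤ) * a + a = ((n : ℤ) + 1) * a by ring,
      show (n : ℤ) * b + b = ((n : ℤ) + 1) * b by ring]
  | pred n ih =>
    rw [show (-(n : ℤ) - 1) = (-(n : ℤ)) - 1 from rfl, _root_.zpow_sub_one, Units.val_mul, ih, hUinv,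
      FF_mul hone hc0]
    have h1 : (((-(n : ℤ)) * b : ℤ) : ZMod p) * (((-a : ℤ)) : ZMod p) = 0 := by
      push_cast
      linear_combination (n : ZMod p) * hab
    rw [h1, chi_zero, one_smul,
      show (-(n : ℤ)) * a + -a = (-(n : ℤ) - 1) * a by ring,
      show (-(n : ℤ)) * b + -b = (-(n : ℤ) - 1) * b by ring]

variable (A' B' : (Matrix (ZMod p) (ZMod p) ℂ)ˣ)

lemma coe_W (hone : ω ^ p = 1) (hc0 : c ≠ 0)
    (hA' : (A' : Matrix (ZMod p) (ZMod p) ℂ) = fun r s => if r = s + 1 then c else 0)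
    (hB' : (B' : Matrix (ZMod p) (ZMod p) ℂ) = fun r s => if r = s then c * ω ^ s.val else 0)
    (k l : ℤ) :
    ((A' ^ k * B' ^ l : (Matrix (ZMod p) (ZMod p) ℂ)ˣ) : Matrix (ZMod p) (ZMod p) ℂ)
      = FF p ω c k l := by
  have hA1 : (A' : Matrix (ZMod p) (ZMod p) ℂ) = FF p ω c 1 0 := by
    rw [hA']
    ext r s
    rw [FF_apply]
    simp [chi_zero]
  have hB1 : (B' : Matrix (ZMod p) (ZMod p) ℂ) = FF p ω c 0 1 := by
    rw [hB']
    ext r s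
    rw [FF_apply]
    simp [chi]
  have hA := coe_zpow hone hc0 1 0 (by simp) A' hA1 k
  have hB := coe_zpow hone hc0 0 1 (by simp) B' hB1 l
  rw [mul_one, mul_zero] at hA
  rw [mul_one, mul_zero] at hB
  rw [Units.val_mul, hA, hB, FF_mul hone hc0]
  rw [show ((0 : ℤ) : ZMod p) = 0 by push_cast; rfl, zero_mul, chi_zero, one_smul,
    add_zero, zero_add]
end units

/-- the main theorem -/
theorem stmt_11 (p : ℕ) (hp : p.Prime) [NeZero p]
    (ω c : ℂ)
    (hω : ω = Complex.exp (2 * Real.pi * Complex.I / p))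
    (hc : c = Complex.I ^ ((1 : ℤ) - (p : ℤ) ^ 2))
    (A' B' : (Matrix (ZMod p) (ZMod p) ℂ)ˣ)
    (hA' : (A' : Matrix (ZMod p) (ZMod p) ℂ) = fun r s => if r = s + 1 then c else 0)
    (hB' : (B' : Matrix (ZMod p) (ZMod p) ℂ) = fun r s => if r = s then c * ω ^ s.val else 0)
    (m : ℤ → ℤ → Set (Matrix (ZMod p) (ZMod p) ℂ))
    (hm : ∀ k l : ℤ, m k l = {X | Xᴴ = -X ∧ X.trace = 0 ∧
      ∃ a b : ℂ, X = a • ((A' ^ k * B' ^ l :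
            (Matrix (ZMod p) (ZMod p) ℂ)ˣ) : Matrix (ZMod p) (ZMod p) ℂ)
        + b • ((A' ^ (-k) * B' ^ (-l) :
            (Matrix (ZMod p) (ZMod p) ℂ)ˣ) : Matrix (ZMod p) (ZMod p) ℂ)}) :
    ∀ k l k' l' : ℤ,
      ¬((k : ZMod p) = 0 ∧ (l : ZMod p) = 0) →
      ¬((k' : ZMod p) = 0 ∧ (l' : ZMod p) = 0) →
      ((∀ X ∈ m k l, ∀ Y ∈ m k' l', X * Y - Y * X = 0)
        ↔ ((k * l' : ℤ) : ZMod p) = ((k' * l : ℤ) : ZMod p)) := by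
  have hp0 : 0 < p := hp.pos
  have hone : ω ^ p = 1 := omega_pow_p hp0 hω
  have hdvd := omega_zpow_eq_one_iff (p := p) hp0 hω
  have hω0 : ω ≠ 0 := hω ▸ Complex.exp_ne_zero _
  have hω1 : ω ≠ 1 := by
    intro h
    have h1 : ((p : ℤ)) ∣ 1 := (hdvd 1).mp (by rw [zpow_one, h])
    have h2 : p ∣ 1 := by exact_mod_cast h1
    exact hp.one_lt.ne' (Nat.dvd_one.mp h2)
  have hcω : ω * (starRingEnd ℂ) ω = 1 := conj_omega hω
  have hc0 : c ≠ 0 := by rw [hc]; exact zpow_ne_zero _ Complex.I_ne_zero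
  have hcc : (starRingEnd ℂ) c = c⁻¹ := by
    rw [hc, map_zpow₀, Complex.conj_I, ← Complex.inv_I, _root_.inv_zpow]
  have cW := coe_W A' B' hone hc0 hA' hB'
  intro k l k' l' hkl hk'l'
  rw [hm k l, hm k' l']
  set M := FF p ω c k l with hM
  set Mb := FF p ω c (-k) (-l) with hMb
  set N := FF p ω c k' l' with hN
  set Nb := FF p ω c (-k') (-l') with hNb
  have hstarchi : ∀ x : ZMod p, star (chi p ω x) = chi p ω (-x) :=
    fun x => conj_chi hone hω0 hcω x
  constructor
  · intro H
    set χ0 := chi p ω ((k : ZMod p) * (l : ZMod p)) with hχ0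
    set χ1 := chi p ω ((k' : ZMod p) * (l' : ZMod p)) with hχ1
    have hMH : Mᴴ = χ0 • Mb := FF_conjTranspose hone hω0 hcω hcc hc0 k l
    have hNH : Nᴴ = χ1 • Nb := FF_conjTranspose hone hω0 hcω hcc hc0 k' l'
    have hMbH : Mbᴴ = χ0 • M := by
      have h1 := FF_conjTranspose (p := p) hone hω0 hcω hcc hc0 (-k) (-l)
      rw [show ((-k : ℤ) : ZMod p) * ((-l : ℤ) : ZMod p) = (k : ZMod p) * (l : ZMod p) by
        push_cast; ring, neg_neg, neg_neg] at h1
      exact h1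
    have hNbH : Nbᴴ = χ1 • N := by
      have h1 := FF_conjTranspose (p := p) hone hω0 hcω hcc hc0 (-k') (-l')
      rw [show ((-k' : ℤ) : ZMod p) * ((-l' : ℤ) : ZMod p) = (k' : ZMod p) * (l' : ZMod p) by
        push_cast; ring, neg_neg, neg_neg] at h1
      exact h1
    have hsχ0 : star χ0 * χ0 = 1 := by
      rw [hstarchi, mul_comm, chi_mul_neg hone]
    have hsχ1 : star χ1 * χ1 = 1 := by
      rw [hstarchi, mul_comm, chi_mul_neg hone]
    have hklneg : ¬(((-k : ℤ) : ZMod p) = 0 ∧ ((-l : ℤ) : ZMod p) = 0) := by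
      push_cast
      simpa [neg_eq_zero] using hkl
    have hk'l'neg : ¬(((-k' : ℤ) : ZMod p) = 0 ∧ ((-l' : ℤ) : ZMod p) = 0) := by
      push_cast
      simpa [neg_eq_zero] using hk'l'
    have trM : M.trace = 0 := FF_trace hp hone hω0 hω1 k l hkl
    have trMb : Mb.trace = 0 := FF_trace hp hone hω0 hω1 (-k) (-l) hklneg
    have trN : N.trace = 0 := FF_trace hp hone hω0 hω1 k' l' hk'l'
    have trNb : Nb.trace = 0 := FF_trace hp hone hω0 hω1 (-k') (-l') hk'l'neg
    -- the four elements
    set X1 := M - χ0 • Mb with hX1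
    set X2 := Complex.I • M + (Complex.I * χ0) • Mb with hX2
    set Y1 := N - χ1 • Nb with hY1
    set Y2 := Complex.I • N + (Complex.I * χ1) • Nb with hY2
    have hX1mem : X1ᴴ = -X1 ∧ X1.trace = 0 ∧ ∃ a b : ℂ,
        X1 = a • ((A' ^ k * B' ^ l : (Matrix (ZMod p) (ZMod p) ℂ)ˣ) : Matrix (ZMod p) (ZMod p) ℂ)
          + b • ((A' ^ (-k) * B' ^ (-l) : (Matrix (ZMod p) (ZMod p) ℂ)ˣ) :
            Matrix (ZMod p) (ZMod p) ℂ) := by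
      refine ⟨?_, ?_, 1, -χ0, ?_⟩
      · rw [hX1, conjTranspose_sub, conjTranspose_smul, hMH, hMbH, smul_smul, hsχ0, one_smul]
        abel
      · rw [hX1, trace_sub, trace_smul, trM, trMb, smul_zero, sub_zero]
      · rw [cW k l, cW (-k) (-l), ← hM, ← hMb, one_smul, neg_smul, ← sub_eq_add_neg]
    have hX2mem : X2ᴴ = -X2 ∧ X2.trace = 0 ∧ ∃ a b : ℂ,
        X2 = a • ((A' ^ k * B' ^ l : (Matrix (ZMod p) (ZMod p) ℂ)ˣ) : Matrix (ZMod p) (ZMod p) ℂ)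
          + b • ((A' ^ (-k) * B' ^ (-l) : (Matrix (ZMod p) (ZMod p) ℂ)ˣ) :
            Matrix (ZMod p) (ZMod p) ℂ) := by
      refine ⟨?_, ?_, Complex.I, Complex.I * χ0, ?_⟩
      · have hs' : (starRingEnd ℂ) χ0 * χ0 = 1 := hsχ0
        rw [hX2, conjTranspose_add, conjTranspose_smul, conjTranspose_smul, hMH, hMbH,
          smul_smul, smul_smul, Complex.star_def, Complex.conj_I]
        rw [show (starRingEnd ℂ) (Complex.I * χ0) * χ0 = -Complex.I from by
          rw [_root_.map_mul, Complex.conj_I, mul_assoc, hs', mul_one]]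
        module
      · rw [hX2, trace_add, trace_smul, trace_smul, trM, trMb, smul_zero, smul_zero, add_zero]
      · rw [cW k l, cW (-k) (-l), ← hM, ← hMb]
    have hY1mem : Y1ᴴ = -Y1 ∧ Y1.trace = 0 ∧ ∃ a b : ℂ,
        Y1 = a • ((A' ^ k' * B' ^ l' : (Matrix (ZMod p) (ZMod p) ℂ)ˣ) : Matrix (ZMod p) (ZMod p) ℂ)
          + b • ((A' ^ (-k') * B' ^ (-l') : (Matrix (ZMod p) (ZMod p) ℂ)ˣ) :
            Matrix (ZMod p) (ZMod p) ℂ) := by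
      refine ⟨?_, ?_, 1, -χ1, ?_⟩
      · rw [hY1, conjTranspose_sub, conjTranspose_smul, hNH, hNbH, smul_smul, hsχ1, one_smul]
        abel
      · rw [hY1, trace_sub, trace_smul, trN, trNb, smul_zero, sub_zero]
      · rw [cW k' l', cW (-k') (-l'), ← hN, ← hNb, one_smul, neg_smul, ← sub_eq_add_neg]
    have hY2mem : Y2ᴴ = -Y2 ∧ Y2.trace = 0 ∧ ∃ a b : ℂ,
        Y2 = a • ((A' ^ k' * B' ^ l' : (Matrix (ZMod p) (ZMod p) ℂ)ˣ) : Matrix (ZMod p) (ZMod p) ℂ)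
          + b • ((A' ^ (-k') * B' ^ (-l') : (Matrix (ZMod p) (ZMod p) ℂ)ˣ) :
            Matrix (ZMod p) (ZMod p) ℂ) := by
      refine ⟨?_, ?_, Complex.I, Complex.I * χ1, ?_⟩
      · have hs' : (starRingEnd ℂ) χ1 * χ1 = 1 := hsχ1
        rw [hY2, conjTranspose_add, conjTranspose_smul, conjTranspose_smul, hNH, hNbH,
          smul_smul, smul_smul, Complex.star_def, Complex.conj_I]
        rw [show (starRingEnd ℂ) (Complex.I * χ1) * χ1 = -Complex.I from by
          rw [_root_.map_mul, Complex.conj_I, mul_assoc, hs', mul_one]]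
        module
      · rw [hY2, trace_add, trace_smul, trace_smul, trN, trNb, smul_zero, smul_zero, add_zero]
      · rw [cW k' l', cW (-k') (-l'), ← hN, ← hNb]
    have e11 := H X1 hX1mem Y1 hY1mem
    have e12 := H X1 hX1mem Y2 hY2mem
    have e21 := H X2 hX2mem Y1 hY1mem
    have e22 := H X2 hX2mem Y2 hY2mem
    have hYcomb : Y1 - Complex.I • Y2 = (2 : ℂ) • N := by
      rw [hY1, hY2]
      rw [smul_add, smul_smul, smul_smul, Complex.I_mul_I]
      rw [show Complex.I * (Complex.I * χ1) = -χ1 by rw [← mul_assoc, Complex.I_mul_I]; ring]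
      rw [neg_one_smul, neg_smul]
      rw [show (2 : ℂ) • N = N + N from two_smul ℂ N]
      abel
    have hXcomb : X1 - Complex.I • X2 = (2 : ℂ) • M := by
      rw [hX1, hX2]
      rw [smul_add, smul_smul, smul_smul, Complex.I_mul_I]
      rw [show Complex.I * (Complex.I * χ0) = -χ0 by rw [← mul_assoc, Complex.I_mul_I]; ring]
      rw [neg_one_smul, neg_smul]
      rw [show (2 : ℂ) • M = M + M from two_smul ℂ M]
      abel
    have step : ∀ X U V W : Matrix (ZMod p) (ZMod p) ℂ, X * U - U * X = 0 → X * V - V * X = 0 →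
        U - Complex.I • V = (2 : ℂ) • W → X * W - W * X = 0 := by
      intro X U V W h1 h2 h3
      rw [sub_eq_zero] at h1 h2
      have h4 : X * (U - Complex.I • V) - (U - Complex.I • V) * X = 0 := by
        rw [mul_sub, sub_mul, mul_smul_comm, smul_mul_assoc, h1, h2]
        abel
      rw [h3, mul_smul_comm, smul_mul_assoc, ← smul_sub, smul_eq_zero] at h4
      exact h4.resolve_left two_ne_zero
    have hX1N := step X1 Y1 Y2 N e11 e12 hYcomb
    have hX2N := step X2 Y1 Y2 N e21 e22 hYcomb
    have hNX1 : N * X1 - X1 * N = 0 := by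
      rw [sub_eq_zero] at hX1N ⊢; exact hX1N.symm
    have hNX2 : N * X2 - X2 * N = 0 := by
      rw [sub_eq_zero] at hX2N ⊢; exact hX2N.symm
    have hNM := step N X1 X2 M hNX1 hNX2 hXcomb
    have hMN : M * N = N * M := (sub_eq_zero.mp hNM).symm
    rw [hM, hN, FF_mul hone hc0, FF_mul hone hc0,
      show k' + k = k + k' by ring, show l' + l = l + l' by ring] at hMN
    have hMN2 : (chi p ω ((l : ZMod p) * (k' : ZMod p))
        - chi p ω ((l' : ZMod p) * (k : ZMod p))) • FF p ω c (k + k') (l + l') = 0 := by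
      rw [sub_smul, hMN, sub_self]
    rcases smul_eq_zero.mp hMN2 with h0 | h0
    · have hchi := chi_inj (p := p) hω0 hdvd _ _ (sub_eq_zero.mp h0)
      push_cast
      linear_combination -hchi
    · exact absurd h0 (FF_ne_zero hω0 hc0 _ _)
  · intro h X hX Y hY
    obtain ⟨-, -, a, b, rfl⟩ := hX
    obtain ⟨-, -, a', b', rfl⟩ := hY
    rw [cW k l, cW (-k) (-l), cW k' l', cW (-k') (-l'), ← hM, ← hMb, ← hN, ← hNb]
    push_cast at h
    have c1 : M * N = N * M := by
      rw [hM, hN, FF_mul hone hc0, FF_mul hone hc0,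
        show k' + k = k + k' by ring, show l' + l = l + l' by ring]
      rw [show (l : ZMod p) * (k' : ZMod p) = (l' : ZMod p) * (k : ZMod p) from by
        first | linear_combination h | linear_combination -h]
    have c2 : M * Nb = Nb * M := by
      rw [hM, hNb, FF_mul hone hc0, FF_mul hone hc0,
        show -k' + k = k + -k' by ring, show -l' + l = l + -l' by ring]
      push_cast
      rw [show (l : ZMod p) * -(k' : ZMod p) = -(l' : ZMod p) * (k : ZMod p) from by
        first | linear_combination h | linear_combination -h]
    have c3 : Mb * N = N * Mb := by
      rw [hMb, hN, FF_mul hone hc0, FF_mul hone hc0,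
        show k' + -k = -k + k' by ring, show l' + -l = -l + l' by ring]
      push_cast
      rw [show -(l : ZMod p) * (k' : ZMod p) = (l' : ZMod p) * -(k : ZMod p) from by
        first | linear_combination h | linear_combination -h]
    have c4 : Mb * Nb = Nb * Mb := by
      rw [hMb, hNb, FF_mul hone hc0, FF_mul hone hc0,
        show -k' + -k = -k + -k' by ring, show -l' + -l = -l + -l' by ring]
      push_cast
      rw [show -(l : ZMod p) * -(k' : ZMod p) = -(l' : ZMod p) * -(k : ZMod p) from by
        first | linear_combination h | linear_combination -h]
    simp only [add_mul, mul_add, smul_mul_assoc, mul_smul_comm, smul_smul]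
    rw [c1, c2, c3, c4]
    module
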